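/- For the single-machine problem with equal processing times p, release dates, and jobs partitioned into two chains where each chain is ordered by nondecreasing release dates, there exists an optimal schedule for minimizing total completion time ∑C_j in which the jobs are processed in nondecreasing order of their release dates. -/
import Mathlib


/-- Completion time of the job in position `k` when jobs with release dates
`rs 0, rs 1, …` (in processing order) and common processing time `p` are
started as early as possible one after the other. -/
def compTime (p : ℝ) (rs : ℕ → ℝ) : ℕ → ℝ
  | 0 => rs 0 + p
  | k + 1 => max (rs (k + 1)) (compTime p rs k) + p

/-- Release dates in processing order for the permutation `π`. -/
noncomputable def relSeq {n : ℕ} (r : Fin n → ℝ) (π : Equiv.Perm (Fin n)) : ℕ → ℝ :=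
  fun k => if h : k < n then r (π ⟨k, h⟩) else 0

/-- A permutation respects the two chains (jobs of equal chain label are
processed in increasing index order). -/
def RespectsChains {n : ℕ} (chain : Fin n → Fin 2) (π : Equiv.Perm (Fin n)) : Prop :=
  ∀ k l : Fin n, k < l → chain (π k) = chain (π l) → π k < π l

/-- Closed form: the completion time in position `k` is the maximum over
`j ≤ k` of `rs j + (k + 1 - j) * p`. -/
lemma compTime_eq_sup' (p : ℝ) (rs : ℕ → ℝ) (k : ℕ) :
    compTime p rs k =
      (Finset.range (k + 1)).sup' (by simp)
        (fun j => rs j + ((k + 1 - j : ℕ) : ℝ) * p) := by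
  induction k with
  | zero => simp [compTime]
  | succ k ih =>
    rw [compTime, ih]
    simp only [Finset.range_add_one (n := k + 1), Finset.sup'_insert]
    have hsup : ∀ q : ℝ,
        (Finset.range (k + 1)).sup'
            (by simp) (fun j => rs j + ((k + 1 - j : ℕ) : ℝ) * p) + q
          = (Finset.range (k + 1)).sup' (by simp)
            (fun j => rs j + ((k + 1 - j : ℕ) : ℝ) * p + q) := by
      intro q
      exact Finset.comp_sup'_eq_sup'_comp _ (fun x => x + q)
        (fun x y => (max_add_add_right x y q).symm)
    rw [← max_add_add_right, hsup p]
    have h1 : rs (k + 1) + ((k + 1 + 1 - (k + 1) : ℕ) : ℝ) * p = rs (k + 1) + p := by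
      norm_num
    rw [Finset.sup'_insert, h1]
    congr 1
    refine Finset.sup'_congr (by simp) rfl ?_
    intro j hj
    rw [Finset.mem_range] at hj
    have : (k + 1 + 1 - j : ℕ) = (k + 1 - j) + 1 := by omega
    rw [this]
    push_cast
    ring

/-- Key pointwise bound: if `r ∘ π` is monotone, each completion time under
`π` is at most the corresponding completion time under any `σ`. -/
lemma compTime_sorted_le {n : ℕ} (r : Fin n → ℝ) (p : ℝ) (hp : 0 ≤ p)
    (π σ : Equiv.Perm (Fin n)) (hmono : Monotone (r ∘ π))
    (k : ℕ) (hk : k < n) :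
    compTime p (relSeq r π) k ≤ compTime p (relSeq r σ) k := by
  rw [compTime_eq_sup', compTime_eq_sup']
  apply Finset.sup'_le
  intro j hj
  rw [Finset.mem_range, Nat.lt_succ_iff] at hj
  have hjn : j < n := lt_of_le_of_lt hj hk
  set jf : Fin n := ⟨j, hjn⟩
  -- There exists a position `i ≤ j` such that `r (σ i) ≥ r (π jf)`.
  have hex : ∃ i : Fin n, (i : ℕ) ≤ j ∧ jf ≤ π.symm (σ i) := by
    by_contra hcon
    push_neg at hcon
    have hinj : Set.InjOn (fun i : Fin n => π.symm (σ i)) (Finset.Iic jf) := by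
      intro a _ b _ hab
      exact σ.injective (π.symm.injective hab)
    have hmaps : ∀ i ∈ Finset.Iic jf, π.symm (σ i) ∈ Finset.Iio jf := by
      intro i hi
      rw [Finset.mem_Iic] at hi
      rw [Finset.mem_Iio]
      exact hcon i (Fin.le_def.mp hi)
    have := Finset.card_le_card_of_injOn _ hmaps hinj
    rw [Fin.card_Iic, Fin.card_Iio] at this
    omega
  obtain ⟨i, hij, hge⟩ := hex
  have hik : (i : ℕ) < k + 1 := by omega
  apply Finset.le_sup'_of_le _ (Finset.mem_range.mpr hik)
  have h1 : relSeq r π j = r (π jf) := by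
    simp [relSeq, hjn, jf]
  have h2 : relSeq r σ (i : ℕ) = r (σ i) := by
    simp [relSeq, i.isLt]
  rw [h1, h2]
  have hr : r (π jf) ≤ r (σ i) := by
    have := hmono hge
    simpa using this
  have hnat : (k + 1 - j : ℕ) ≤ (k + 1 - (i : ℕ) : ℕ) := by omega
  have hcast : ((k + 1 - j : ℕ) : ℝ) ≤ ((k + 1 - (i : ℕ) : ℕ) : ℝ) := by
    exact_mod_cast hnat
  have := mul_le_mul_of_nonneg_right hcast hp
  linarith

/-- Two chains with nondecreasing release dates along each chain: there exists
an optimal schedule for `∑ C_j` processing the jobs in nondecreasing order of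
release dates. -/
theorem exists_optimal_sorted_two_chains {n : ℕ} (r : Fin n → ℝ) (p : ℝ)
    (hp : 0 < p) (chain : Fin n → Fin 2)
    (hchain : ∀ i j : Fin n, i < j → chain i = chain j → r i ≤ r j) :
    ∃ π : Equiv.Perm (Fin n), RespectsChains chain π ∧
      (∀ k l : Fin n, k ≤ l → r (π k) ≤ r (π l)) ∧
      ∀ σ : Equiv.Perm (Fin n), RespectsChains chain σ →
        ∑ k ∈ Finset.range n, compTime p (relSeq r π) k ≤
          ∑ k ∈ Finset.range n, compTime p (relSeq r σ) k := by
  classical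
  set π := Tuple.sort r with hπdef
  have hsort := (Tuple.eq_sort_iff (f := r) (σ := π)).mp rfl
  have hmono : Monotone (r ∘ π) := hsort.1
  have hstab := hsort.2
  refine ⟨π, ?_, ?_, ?_⟩
  · intro k l hkl hc
    rcases lt_trichotomy (π k) (π l) with h | h | h
    · exact h
    · exact absurd (π.injective h) hkl.ne
    · have h1 : r (π l) ≤ r (π k) := hchain _ _ h hc.symm
      have h2 : r (π k) ≤ r (π l) := hmono hkl.le
      exact hstab k l hkl (le_antisymm h2 h1)
  · intro k l hkl
    exact hmono hkl
  · intro σ _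
    apply Finset.sum_le_sum
    intro k hk
    exact compTime_sorted_le r p hp.le π σ hmono k (Finset.mem_range.mp hk)
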